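/- Let 0 < α < d, 1 ≤ p < d/α, f ∈ L^p(ℝ^d) nonnegative, ε > 0. Then there is a subset T of Q_α such that: (a) for each Q ∈ Q_α with ℓ(Q)^α f_Q > ε there exists P ∈ T with Q ⊆ parent(P) and f_Q ≤ 2^d f_P; and (b) for any two Q, P ∈ T, either parent(Q) = parent(P), or parent(Q) ∩ parent(P) = ∅, or f_Q/f_P ∉ (2^{-d}, 2^d). -/

import Mathlib

open MeasureTheory Metric Set Filter
open scoped ENNReal NNReal

noncomputable section

abbrev Euc (d : ℕ) : Type := EuclideanSpace ℝ (Fin d)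

def setAvg {d : ℕ} (s : Set (Euc d)) (f : Euc d → ℝ) : ℝ :=
  (volume s).toReal⁻¹ * ∫ y in s, f y

def dCube (d : ℕ) (n : ℤ) (k : Fin d → ℤ) : Set (Euc d) :=
  {y | ∀ i, (k i : ℝ) * 2 ^ n ≤ y i ∧ y i < ((k i : ℝ) + 1) * 2 ^ n}

def cubeAvg {d : ℕ} (f : Euc d → ℝ) (n : ℤ) (k : Fin d → ℤ) : ℝ :=
  setAvg (dCube d n k) f

/-- `dCube d n k ∈ Q_α`. -/
def inQ (d : ℕ) (α : ℝ) (f : Euc d → ℝ) (n : ℤ) (k : Fin d → ℤ) : Prop :=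
  ∀ m : ℤ, ∀ j : Fin d → ℤ, dCube d n k ⊂ dCube d m j →
    ((2 : ℝ) ^ m) ^ α * cubeAvg f m j < ((2 : ℝ) ^ n) ^ α * cubeAvg f n k

/-- The dyadic parent of a dyadic cube (encoded as an index pair). -/
def dParent (d : ℕ) (Q : ℤ × (Fin d → ℤ)) : ℤ × (Fin d → ℤ) :=
  (Q.1 + 1, fun i => Int.fdiv (Q.2 i) 2)

namespace Stmt13

lemma corner_mem (d : ℕ) (n : ℤ) (k : Fin d → ℤ) :
    (WithLp.toLp 2 (fun i => (k i : ℝ) * 2 ^ n) : Euc d) ∈ dCube d n k := by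
  intro i
  have h : (0:ℝ) < 2 ^ n := zpow_pos two_pos n
  constructor
  · exact le_refl _
  · have : (k i : ℝ) * 2 ^ n < ((k i : ℝ) + 1) * 2 ^ n := by nlinarith
    exact this

lemma dCube_nonempty (d : ℕ) (n : ℤ) (k : Fin d → ℤ) : (dCube d n k).Nonempty :=
  ⟨_, corner_mem d n k⟩

lemma ico_core {m m' jj jj' : ℤ} (hmm : m ≤ m') {x y : ℝ}
    (hx1 : (jj:ℝ) * 2 ^ m ≤ x) (hx2 : x < ((jj:ℝ) + 1) * 2 ^ m)
    (hx3 : (jj':ℝ) * 2 ^ m' ≤ x) (hx4 : x < ((jj':ℝ) + 1) * 2 ^ m')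
    (hy1 : (jj:ℝ) * 2 ^ m ≤ y) (hy2 : y < ((jj:ℝ) + 1) * 2 ^ m) :
    (jj':ℝ) * 2 ^ m' ≤ y ∧ y < ((jj':ℝ) + 1) * 2 ^ m' := by
  set t := (m' - m).toNat with ht
  have htc : (t : ℤ) = m' - m := Int.toNat_of_nonneg (by omega)
  have hpm : (0:ℝ) < 2 ^ m := zpow_pos two_pos m
  have h2 : (2:ℝ) ^ m' = 2 ^ m * 2 ^ t := by
    rw [← zpow_natCast (2:ℝ) t, ← zpow_add₀ (two_ne_zero) m (t:ℤ)]
    congr 1; omega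
  have A : jj' * 2 ^ t ≤ jj := by
    have h3 : (jj':ℝ) * (2 ^ m * 2 ^ t) < ((jj:ℝ) + 1) * 2 ^ m := by
      rw [← h2]; exact lt_of_le_of_lt hx3 hx2
    have h3' : ((jj':ℝ) * 2 ^ t) * 2 ^ m < ((jj:ℝ) + 1) * 2 ^ m := by
      calc ((jj':ℝ) * 2 ^ t) * 2 ^ m = (jj':ℝ) * (2 ^ m * 2 ^ t) := by ring
      _ < _ := h3
    have h4 : (jj':ℝ) * 2 ^ t < (jj:ℝ) + 1 := lt_of_mul_lt_mul_right h3' hpm.le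
    have h5 : ((jj' * 2 ^ t : ℤ) : ℝ) < ((jj + 1 : ℤ) : ℝ) := by push_cast; linarith
    have h6 : jj' * 2 ^ t < jj + 1 := by exact_mod_cast h5
    omega
  have B : jj + 1 ≤ (jj' + 1) * 2 ^ t := by
    have h3 : (jj:ℝ) * 2 ^ m < ((jj':ℝ) + 1) * (2 ^ m * 2 ^ t) := by
      rw [← h2]; exact lt_of_le_of_lt hx1 hx4
    have h3' : (jj:ℝ) * 2 ^ m < (((jj':ℝ) + 1) * 2 ^ t) * 2 ^ m := by
      calc (jj:ℝ) * 2 ^ m < ((jj':ℝ) + 1) * (2 ^ m * 2 ^ t) := h3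
      _ = (((jj':ℝ) + 1) * 2 ^ t) * 2 ^ m := by ring
    have h4 : (jj:ℝ) < ((jj':ℝ) + 1) * 2 ^ t := lt_of_mul_lt_mul_right h3' hpm.le
    have h5 : ((jj : ℤ) : ℝ) < (((jj' + 1) * 2 ^ t : ℤ) : ℝ) := by push_cast; linarith
    have h6 : jj < (jj' + 1) * 2 ^ t := by exact_mod_cast h5
    omega
  constructor
  · have : ((jj' * 2 ^ t : ℤ) : ℝ) ≤ (jj : ℝ) := by exact_mod_cast A
    have h6 : (jj':ℝ) * 2 ^ t ≤ (jj:ℝ) := by push_cast at this; linarith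
    calc (jj':ℝ) * 2 ^ m' = ((jj':ℝ) * 2 ^ t) * 2 ^ m := by rw [h2]; ring
      _ ≤ (jj:ℝ) * 2 ^ m := by nlinarith
      _ ≤ y := hy1
  · have : ((jj + 1 : ℤ) : ℝ) ≤ (((jj' + 1) * 2 ^ t : ℤ) : ℝ) := by exact_mod_cast B
    have h6 : (jj:ℝ) + 1 ≤ ((jj':ℝ) + 1) * 2 ^ t := by push_cast at this; linarith
    calc y < ((jj:ℝ) + 1) * 2 ^ m := hy2
      _ ≤ (((jj':ℝ) + 1) * 2 ^ t) * 2 ^ m := by nlinarith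
      _ = ((jj':ℝ) + 1) * 2 ^ m' := by rw [h2]; ring

lemma dCube_subset_of_inter {d : ℕ} {m m' : ℤ} {j j' : Fin d → ℤ} (hmm : m ≤ m')
    (h : (dCube d m j ∩ dCube d m' j').Nonempty) : dCube d m j ⊆ dCube d m' j' := by
  obtain ⟨x, hx1, hx2⟩ := h
  intro y hy i
  exact ico_core hmm (hx1 i).1 (hx1 i).2 (hx2 i).1 (hx2 i).2 (hy i).1 (hy i).2

lemma lt_of_ssubset {d : ℕ} {n m : ℤ} {k j : Fin d → ℤ}
    (h : dCube d n k ⊂ dCube d m j) : n < m := by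
  by_contra hc
  push_neg at hc
  have hne : (dCube d m j ∩ dCube d n k).Nonempty := by
    obtain ⟨x, hx⟩ := dCube_nonempty d n k
    exact ⟨x, h.1 hx, hx⟩
  exact h.2 (dCube_subset_of_inter hc hne)

lemma subset_parent {d : ℕ} (Q : ℤ × (Fin d → ℤ)) :
    dCube d Q.1 Q.2 ⊆ dCube d (dParent d Q).1 (dParent d Q).2 := by
  intro y hy i
  obtain ⟨h1, h2⟩ := hy i
  have hq : 2 * Int.fdiv (Q.2 i) 2 ≤ Q.2 i ∧ Q.2 i < 2 * Int.fdiv (Q.2 i) 2 + 2 := by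
    rw [Int.fdiv_eq_ediv_of_nonneg _ (by norm_num)]; omega
  have hpm : (0:ℝ) < 2 ^ Q.1 := zpow_pos two_pos Q.1
  have h2p : (2:ℝ) ^ (Q.1 + 1) = 2 ^ Q.1 * 2 := by
    rw [zpow_add₀ (two_ne_zero) Q.1 1]; norm_num
  simp only [dParent]
  constructor
  · have : ((2 * Int.fdiv (Q.2 i) 2 : ℤ) : ℝ) ≤ ((Q.2 i : ℤ) : ℝ) := by exact_mod_cast hq.1
    push_cast at this
    calc ((Int.fdiv (Q.2 i) 2 : ℤ) : ℝ) * 2 ^ (Q.1 + 1)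
        = (2 * (Int.fdiv (Q.2 i) 2 : ℝ)) * 2 ^ Q.1 := by rw [h2p]; ring
      _ ≤ (Q.2 i : ℝ) * 2 ^ Q.1 := by nlinarith
      _ ≤ y i := h1
  · have hi : Q.2 i + 1 ≤ 2 * Int.fdiv (Q.2 i) 2 + 2 := by omega
    have : ((Q.2 i + 1 : ℤ) : ℝ) ≤ ((2 * Int.fdiv (Q.2 i) 2 + 2 : ℤ) : ℝ) := by exact_mod_cast hi
    push_cast at this
    calc y i < ((Q.2 i : ℝ) + 1) * 2 ^ Q.1 := h2
      _ ≤ (2 * (Int.fdiv (Q.2 i) 2 : ℝ) + 2) * 2 ^ Q.1 := by nlinarith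
      _ = ((Int.fdiv (Q.2 i) 2 : ℝ) + 1) * 2 ^ (Q.1 + 1) := by rw [h2p]; ring

lemma volume_dCube (d : ℕ) (n : ℤ) (k : Fin d → ℤ) :
    volume (dCube d n k) = ENNReal.ofReal ((2:ℝ) ^ n) ^ d := by
  have hset : dCube d n k = (MeasurableEquiv.toLp 2 (Fin d → ℝ)).symm ⁻¹'
      (Set.univ.pi fun i => Ico ((k i : ℝ) * 2 ^ n) (((k i : ℝ) + 1) * 2 ^ n)) := by
    ext y
    simp only [dCube, mem_setOf_eq, mem_preimage, Set.mem_univ_pi, mem_Ico]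
    rfl
  have hmeas : MeasurableSet (Set.univ.pi fun i : Fin d =>
      Ico ((k i : ℝ) * 2 ^ n) (((k i : ℝ) + 1) * 2 ^ n)) :=
    MeasurableSet.univ_pi fun i => measurableSet_Ico
  rw [hset, (EuclideanSpace.volume_preserving_symm_measurableEquiv_toLp (Fin d)).measure_preimage
    hmeas.nullMeasurableSet, volume_pi_pi]
  have : ∀ i : Fin d, volume (Ico ((k i : ℝ) * 2 ^ n) (((k i : ℝ) + 1) * 2 ^ n))
      = ENNReal.ofReal ((2:ℝ) ^ n) := by
    intro i
    rw [Real.volume_Ico]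
    congr 1
    ring
  simp only [this, Finset.prod_const, Finset.card_univ, Fintype.card_fin]

lemma volume_dCube_toReal (d : ℕ) (n : ℤ) (k : Fin d → ℤ) :
    (volume (dCube d n k)).toReal = ((2:ℝ) ^ n) ^ d := by
  rw [volume_dCube, ENNReal.toReal_pow, ENNReal.toReal_ofReal (zpow_pos two_pos n).le]

lemma setIntegral_le {d : ℕ} (f : Euc d → ℝ) (hm : AEStronglyMeasurable f volume)
    (s : Set (Euc d)) :
    ∫ y in s, f y ≤ (eLpNorm f 1 (volume.restrict s)).toReal := by
  calc ∫ y in s, f y ≤ |∫ y in s, f y| := le_abs_self _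
    _ = ‖∫ y in s, f y‖ := (Real.norm_eq_abs _).symm
    _ ≤ ∫ y in s, ‖f y‖ := norm_integral_le_integral_norm _
    _ = (∫⁻ y, ‖f y‖ₑ ∂(volume.restrict s)).toReal :=
        integral_norm_eq_lintegral_enorm hm.restrict
    _ = _ := by rw [eLpNorm_one_eq_lintegral_enorm]

lemma cubeAvg_le (d : ℕ) (p : ℝ) (hp : 1 ≤ p) (f : Euc d → ℝ)
    (hfp : MemLp f (ENNReal.ofReal p) volume) (n : ℤ) (k : Fin d → ℤ) :
    cubeAvg f n k ≤ (eLpNorm f (ENNReal.ofReal p) volume).toReal *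
      ((volume (dCube d n k)).toReal) ^ (-(1/p)) := by
  set s := dCube d n k with hs
  set q := ENNReal.ofReal p with hqdef
  set A := eLpNorm f q volume with hA
  have hp0 : 0 < p := lt_of_lt_of_le one_pos hp
  have hq1 : (1 : ℝ≥0∞) ≤ q := ENNReal.one_le_ofReal.mpr hp
  have hqto : q.toReal = p := ENNReal.toReal_ofReal hp0.le
  have hVne : volume s ≠ ⊤ := by
    rw [hs, volume_dCube]
    exact (ENNReal.pow_ne_top ENNReal.ofReal_ne_top)
  have hVpos : 0 < (volume s).toReal := by
    rw [hs, volume_dCube_toReal]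
    positivity
  have hAne : A ≠ ⊤ := hfp.2.ne
  have hm := hfp.1
  have h1 : eLpNorm f 1 (volume.restrict s) ≤
      eLpNorm f q (volume.restrict s) * (volume.restrict s Set.univ) ^ (1/(1:ℝ≥0∞).toReal - 1/q.toReal) :=
    eLpNorm_le_eLpNorm_mul_rpow_measure_univ hq1 hm.restrict
  have h2 : eLpNorm f q (volume.restrict s) ≤ A := eLpNorm_mono_measure f Measure.restrict_le_self
  have hexp : 1/(1:ℝ≥0∞).toReal - 1/q.toReal = 1 - 1/p := by
    rw [hqto, ENNReal.toReal_one]; norm_num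
  have h3 : eLpNorm f 1 (volume.restrict s) ≤ A * (volume s) ^ (1 - 1/p) := by
    refine le_trans h1 ?_
    rw [Measure.restrict_apply_univ, hexp]
    exact mul_le_mul_left h2 _
  have hexp0 : (0:ℝ) ≤ 1 - 1/p := by
    rw [sub_nonneg]
    exact (div_le_one hp0).mpr hp
  have hne2 : A * (volume s) ^ (1 - 1/p) ≠ ⊤ :=
    ENNReal.mul_ne_top hAne (ENNReal.rpow_ne_top_of_nonneg hexp0 hVne)
  have h4 : (eLpNorm f 1 (volume.restrict s)).toReal ≤ A.toReal * (volume s).toReal ^ (1 - 1/p) := by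
    have := ENNReal.toReal_mono hne2 h3
    rwa [ENNReal.toReal_mul, ← ENNReal.toReal_rpow] at this
  calc cubeAvg f n k = (volume s).toReal⁻¹ * ∫ y in s, f y := rfl
    _ ≤ (volume s).toReal⁻¹ * (A.toReal * (volume s).toReal ^ (1 - 1/p)) := by
        exact mul_le_mul_of_nonneg_left (le_trans (setIntegral_le f hm s) h4)
          (inv_nonneg.mpr ENNReal.toReal_nonneg)
    _ = A.toReal * (volume s).toReal ^ (-(1/p)) := by
        rw [show -(1/p) = (-1) + (1 - 1/p) by ring, Real.rpow_add hVpos, Real.rpow_neg_one]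
        ring

lemma exists_level_bound (d : ℕ) (α p : ℝ) (hα : 0 < α) (hp : 1 ≤ p) (hpd : p < (d:ℝ) / α)
    (f : Euc d → ℝ) (hfp : MemLp f (ENNReal.ofReal p) volume) (ε : ℝ) (hε : 0 < ε) :
    ∃ N : ℤ, ∀ n : ℤ, ∀ k : Fin d → ℤ, ε < ((2:ℝ) ^ n) ^ α * cubeAvg f n k → n ≤ N := by
  set C := (eLpNorm f (ENNReal.ofReal p) volume).toReal with hC
  have hp0 : 0 < p := lt_of_lt_of_le one_pos hp
  have hβ : α - (d:ℝ) / p < 0 := by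
    have h1 : p * α < d := (lt_div_iff₀ hα).mp hpd
    have h2 : α < (d:ℝ) / p := (lt_div_iff₀ hp0).mpr (by linarith)
    linarith
  have htends : Tendsto (fun n : ℤ => C * (2:ℝ) ^ ((n:ℝ) * (α - (d:ℝ)/p))) atTop (nhds 0) := by
    have h1 : Tendsto (fun n : ℤ => (n:ℝ)) atTop atTop := tendsto_intCast_atTop_atTop
    have h2 : Tendsto (fun n : ℤ => (n:ℝ) * (α - (d:ℝ)/p)) atTop atBot :=
      h1.atTop_mul_const_of_neg hβ
    have h3 : Tendsto (fun n : ℤ => Real.log 2 * ((n:ℝ) * (α - (d:ℝ)/p))) atTop atBot :=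
      h2.const_mul_atBot (Real.log_pos one_lt_two)
    have h4 : Tendsto (fun n : ℤ => Real.exp (Real.log 2 * ((n:ℝ) * (α - (d:ℝ)/p)))) atTop (nhds 0) :=
      Real.tendsto_exp_atBot.comp h3
    have heq : (fun n : ℤ => C * (2:ℝ) ^ ((n:ℝ) * (α - (d:ℝ)/p)))
        = fun n : ℤ => C * Real.exp (Real.log 2 * ((n:ℝ) * (α - (d:ℝ)/p))) := by
      funext n; rw [Real.rpow_def_of_pos two_pos]
    rw [heq]
    simpa using h4.const_mul C
  obtain ⟨N₀, hN₀⟩ := eventually_atTop.mp (htends.eventually_lt_const hε)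
  refine ⟨N₀, fun n k hval => ?_⟩
  by_contra hc
  push_neg at hc
  have hb := hN₀ n (le_of_lt hc)
  have h2n : (2:ℝ) ^ (n:ℤ) = (2:ℝ) ^ ((n:ℝ)) := (Real.rpow_intCast 2 n).symm
  have hv : (volume (dCube d n k)).toReal = (2:ℝ) ^ ((n:ℝ) * d) := by
    rw [volume_dCube_toReal, h2n, ← Real.rpow_natCast ((2:ℝ) ^ ((n:ℝ))) d,
      ← Real.rpow_mul (by norm_num : (0:ℝ) ≤ 2)]
  have hα2 : ((2:ℝ) ^ (n:ℤ)) ^ α = (2:ℝ) ^ ((n:ℝ) * α) := by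
    rw [h2n, ← Real.rpow_mul (by norm_num : (0:ℝ) ≤ 2)]
  have hca := cubeAvg_le d p hp f hfp n k
  have hnn : (0:ℝ) ≤ ((2:ℝ) ^ (n:ℤ)) ^ α := Real.rpow_nonneg (by positivity) α
  have hbound : ((2:ℝ) ^ n) ^ α * cubeAvg f n k ≤ C * (2:ℝ) ^ ((n:ℝ) * (α - (d:ℝ)/p)) := by
    calc ((2:ℝ) ^ n) ^ α * cubeAvg f n k
        ≤ ((2:ℝ) ^ n) ^ α * (C * ((volume (dCube d n k)).toReal) ^ (-(1/p))) :=
          mul_le_mul_of_nonneg_left hca hnn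
      _ = C * ((2:ℝ) ^ ((n:ℝ) * α) * ((2:ℝ) ^ ((n:ℝ) * d)) ^ (-(1/p))) := by
          rw [hα2, hv]; ring
      _ = C * (2:ℝ) ^ ((n:ℝ) * (α - (d:ℝ)/p)) := by
          rw [← Real.rpow_mul (by norm_num : (0:ℝ) ≤ 2), ← Real.rpow_add two_pos]
          congr 1
          ring
  linarith

end Stmt13

/-- The stopping-time selection: a cube `Q` at level `N - k` is selected iff it lies in `S`
and its average dominates (up to factor `c`) the average of every previously selected cube
whose parent strictly contains the parent of `Q`. -/
def TTset (d : ℕ) (S : Set (ℤ × (Fin d → ℤ))) (F : ℤ × (Fin d → ℤ) → ℝ) (c : ℝ) (N : ℤ) :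
    ℕ → Set (ℤ × (Fin d → ℤ))
  | k => {Q | Q ∈ S ∧ Q.1 = N - k ∧ ∀ j : ℕ, j < k → ∀ R ∈ TTset d S F c N j,
      dCube d (dParent d Q).1 (dParent d Q).2 ⊂ dCube d (dParent d R).1 (dParent d R).2 →
        c * F R ≤ F Q}
  termination_by k => k

theorem stmt13 (d : ℕ) (α p : ℝ) (hα : 0 < α) (hαd : α < d)
    (hp : 1 ≤ p) (hpd : p < d / α)
    (f : Euc d → ℝ) (hf : 0 ≤ f) (hfp : MemLp f (ENNReal.ofReal p) volume)
    (ε : ℝ) (hε : 0 < ε) :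
    ∃ T : Set (ℤ × (Fin d → ℤ)),
      (∀ Q ∈ T, inQ d α f Q.1 Q.2) ∧
      (∀ Q : ℤ × (Fin d → ℤ), inQ d α f Q.1 Q.2 →
        ε < ((2 : ℝ) ^ Q.1) ^ α * cubeAvg f Q.1 Q.2 →
        ∃ P ∈ T, dCube d Q.1 Q.2 ⊆ dCube d (dParent d P).1 (dParent d P).2 ∧
          cubeAvg f Q.1 Q.2 ≤ 2 ^ d * cubeAvg f P.1 P.2) ∧
      (∀ Q ∈ T, ∀ P ∈ T,
        dCube d (dParent d Q).1 (dParent d Q).2 = dCube d (dParent d P).1 (dParent d P).2 ∨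
        dCube d (dParent d Q).1 (dParent d Q).2 ∩ dCube d (dParent d P).1 (dParent d P).2 = ∅ ∨
        cubeAvg f Q.1 Q.2 / cubeAvg f P.1 P.2 ∉ Ioo (((2 : ℝ) ^ d)⁻¹) ((2 : ℝ) ^ d)) := by
  classical
  set F : ℤ × (Fin d → ℤ) → ℝ := fun Q => cubeAvg f Q.1 Q.2 with hF
  set S : Set (ℤ × (Fin d → ℤ)) :=
    {Q | inQ d α f Q.1 Q.2 ∧ ε < ((2 : ℝ) ^ Q.1) ^ α * cubeAvg f Q.1 Q.2} with hSdef
  obtain ⟨N, hN⟩ := Stmt13.exists_level_bound d α p hα hp hpd f hfp ε hε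
  set c : ℝ := (2:ℝ) ^ d with hcdef
  have hc0 : (0:ℝ) < c := by positivity
  have hc1 : (1:ℝ) ≤ c := one_le_pow₀ one_le_two
  have hTsub : ∀ kk : ℕ, ∀ Q, Q ∈ TTset d S F c N kk → Q ∈ S ∧ Q.1 = N - kk := by
    intro kk Q h
    rw [TTset] at h
    exact ⟨h.1, h.2.1⟩
  have hSpos : ∀ Q ∈ S, 0 < F Q := by
    intro Q hQ
    have h2 : ε < ((2 : ℝ) ^ Q.1) ^ α * F Q := hQ.2
    have h3 : (0:ℝ) < ((2 : ℝ) ^ Q.1) ^ α := Real.rpow_pos_of_pos (zpow_pos two_pos _) α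
    nlinarith
  have hSlev : ∀ Q ∈ S, Q.1 ≤ N := fun Q hQ => hN Q.1 Q.2 hQ.2
  refine ⟨⋃ kk : ℕ, TTset d S F c N kk, ?_, ?_, ?_⟩
  · intro Q hQ
    obtain ⟨kk, hk⟩ := mem_iUnion.mp hQ
    exact ((hTsub kk Q hk).1).1
  · intro Q hQ1 hQ2
    have hQS : Q ∈ S := ⟨hQ1, hQ2⟩
    have hlev : Q.1 ≤ N := hSlev Q hQS
    set kk := (N - Q.1).toNat with hkk
    have hkkz : (kk:ℤ) = N - Q.1 := Int.toNat_of_nonneg (by omega)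
    by_cases hmem : Q ∈ TTset d S F c N kk
    · refine ⟨Q, mem_iUnion.mpr ⟨kk, hmem⟩, Stmt13.subset_parent Q, ?_⟩
      have := hSpos Q hQS
      nlinarith
    · rw [TTset] at hmem
      simp only [Set.mem_setOf_eq] at hmem
      push_neg at hmem
      obtain ⟨j, hj, R, hR, hss, hlt⟩ := hmem hQS (by omega)
      exact ⟨R, mem_iUnion.mpr ⟨j, hR⟩, (Stmt13.subset_parent Q).trans hss.1, le_of_lt hlt⟩
  · intro Q hQ P hP
    obtain ⟨kk, hQk⟩ := mem_iUnion.mp hQ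
    obtain ⟨jj, hPj⟩ := mem_iUnion.mp hP
    by_cases heq : dCube d (dParent d Q).1 (dParent d Q).2 = dCube d (dParent d P).1 (dParent d P).2
    · exact Or.inl heq
    by_cases hdis : dCube d (dParent d Q).1 (dParent d Q).2 ∩ dCube d (dParent d P).1 (dParent d P).2 = ∅
    · exact Or.inr (Or.inl hdis)
    refine Or.inr (Or.inr ?_)
    have hne : (dCube d (dParent d Q).1 (dParent d Q).2 ∩
        dCube d (dParent d P).1 (dParent d P).2).Nonempty := nonempty_iff_ne_empty.mpr hdis
    have hQS := (hTsub kk Q hQk).1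
    have hPS := (hTsub jj P hPj).1
    have hQlev := (hTsub kk Q hQk).2
    have hPlev := (hTsub jj P hPj).2
    have hFQ : 0 < F Q := hSpos Q hQS
    have hFP : 0 < F P := hSpos P hPS
    rcases le_or_gt ((dParent d Q).1) ((dParent d P).1) with hle | hlt
    · have hsub : dCube d (dParent d Q).1 (dParent d Q).2 ⊆
          dCube d (dParent d P).1 (dParent d P).2 := Stmt13.dCube_subset_of_inter hle hne
      have hss : dCube d (dParent d Q).1 (dParent d Q).2 ⊂
          dCube d (dParent d P).1 (dParent d P).2 := hsub.ssubset_of_ne heq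
      have hlvl : (dParent d Q).1 < (dParent d P).1 := Stmt13.lt_of_ssubset hss
      have hjk : jj < kk := by
        simp only [dParent] at hlvl
        omega
      have hkey : c * F P ≤ F Q := by
        have h := hQk
        rw [TTset] at h
        exact h.2.2 jj hjk P hPj hss
      have hrat : c ≤ F Q / F P := (le_div_iff₀ hFP).mpr (by linarith)
      exact fun hIoo => absurd hIoo.2 (not_lt.mpr hrat)
    · have hsub : dCube d (dParent d P).1 (dParent d P).2 ⊆
          dCube d (dParent d Q).1 (dParent d Q).2 := by
        refine Stmt13.dCube_subset_of_inter hlt.le ?_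
        rwa [Set.inter_comm] at hne
      have hss : dCube d (dParent d P).1 (dParent d P).2 ⊂
          dCube d (dParent d Q).1 (dParent d Q).2 := hsub.ssubset_of_ne (Ne.symm heq)
      have hlvl : (dParent d P).1 < (dParent d Q).1 := Stmt13.lt_of_ssubset hss
      have hjk : kk < jj := by
        simp only [dParent] at hlvl
        omega
      have hkey : c * F Q ≤ F P := by
        have h := hPj
        rw [TTset] at h
        exact h.2.2 kk hjk Q hQk hss
      have hrat : F Q / F P ≤ c⁻¹ := by
        rw [div_le_iff₀ hFP]
        rw [← mul_le_mul_iff_of_pos_left hc0, ← mul_assoc, mul_inv_cancel₀ hc0.ne', one_mul]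
        exact hkey
      exact fun hIoo => absurd hIoo.1 (not_lt.mpr hrat)
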